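/- In the free product A = ⟨a,b,c | a² = b² = c² = 1⟩ of three copies of ℤ/2, the elements abc, bca, cab freely generate a free subgroup of rank 3; that is, the homomorphism from the free group on three generators x, y, z to A defined by x ↦ abc, y ↦ bca, z ↦ cab is injective. -/

import Mathlib

/-- The relators `a², b², c²` of the free product `ℤ/2 * ℤ/2 * ℤ/2`. -/
def relsA : Set (FreeGroup (Fin 3)) :=
  {FreeGroup.of 0 ^ 2, FreeGroup.of 1 ^ 2, FreeGroup.of 2 ^ 2}

/-- The group `A = ⟨a,b,c | a² = b² = c² = 1⟩`. -/
abbrev A : Type := PresentedGroup relsA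

/-- The generator `a` of `A`. -/
def pa : A := PresentedGroup.of (rels := relsA) 0
/-- The generator `b` of `A`. -/
def pb : A := PresentedGroup.of (rels := relsA) 1
/-- The generator `c` of `A`. -/
def pc : A := PresentedGroup.of (rels := relsA) 2

/-- The homomorphism from the free group on `x, y, z` to `A` defined by
`x ↦ abc`, `y ↦ bca`, `z ↦ cab`. -/
def jA : FreeGroup (Fin 3) →* A :=
  FreeGroup.lift fun i => ![pa * pb * pc, pb * pc * pa, pc * pa * pb] i

/-- The set of reduced words over `{0,1,2}` (no two adjacent letters equal). -/
def SS : Type := {l : List (Fin 3) // l.Chain' (· ≠ ·)}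

lemma cons_head_tail {α : Type*} {a : α} {l : List α} (h : l.head? = some a) :
    l = a :: l.tail := by cases l <;> simp_all

/-- Toggling the letter `i` at the front of a reduced word. -/
def fmo (i : Fin 3) (s : SS) : SS :=
  if h : s.val.head? = some i then ⟨s.val.tail, s.prop.tail⟩
  else ⟨i :: s.val, List.isChain_cons.2
    ⟨fun b hb hib => h (by simp only [Option.mem_def] at hb; rw [hib]; exact hb), s.prop⟩⟩

lemma fmo_val_pos {i : Fin 3} {s : SS} (h : s.val.head? = some i) :
    (fmo i s).val = s.val.tail := by simp [fmo, h]

lemma fmo_val_neg {i : Fin 3} {s : SS} (h : s.val.head? ≠ some i) :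
    (fmo i s).val = i :: s.val := by simp [fmo, h]

lemma tail_head? {i : Fin 3} {s : SS} (h : s.val.head? = some i) :
    s.val.tail.head? ≠ some i := by
  intro hc
  have hchain := s.prop
  rw [cons_head_tail h, cons_head_tail hc] at hchain
  simp only [List.Chain', List.isChain_cons_cons] at hchain
  exact hchain.1 rfl

lemma fmo_involutive (i : Fin 3) : Function.Involutive (fmo i) := by
  intro s
  by_cases h : s.val.head? = some i
  · have h1 : (fmo i s).val = s.val.tail := fmo_val_pos h
    have htail : (fmo i s).val.head? ≠ some i := by rw [h1]; exact tail_head? h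
    apply Subtype.ext
    rw [fmo_val_neg htail, h1, ← cons_head_tail h]
  · apply Subtype.ext
    rw [fmo_val_pos (by rw [fmo_val_neg h]; rfl), fmo_val_neg h]
    rfl

/-- The permutation toggling letter `i`. -/
def sigma (i : Fin 3) : Equiv.Perm SS := (fmo_involutive i).toPerm

lemma sigma_apply (i : Fin 3) (s : SS) : sigma i s = fmo i s := rfl

lemma sigma_inv (i : Fin 3) : (sigma i)⁻¹ = sigma i := rfl

lemma sigma_sq (i : Fin 3) : sigma i ^ 2 = 1 := by
  ext s
  simp [sq, Equiv.Perm.mul_apply, sigma_apply, fmo_involutive i s]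

lemma rels_check : ∀ r ∈ relsA, FreeGroup.lift (fun i => sigma i) r = 1 := by
  intro r hr
  rcases hr with h | h | h <;> subst h <;>
    simp only [map_pow, FreeGroup.lift_apply_of] <;> exact sigma_sq _

/-- The homomorphism `A →* Perm SS`. -/
def psiA : A →* Equiv.Perm SS := PresentedGroup.toGroup rels_check

lemma psiA_of (i : Fin 3) : psiA (PresentedGroup.of i) = sigma i :=
  PresentedGroup.toGroup.of rels_check

/-- Key combinatorial lemma: multiplying by `σᵢσⱼσₖ` produces a word with prefix `[i, j]`,
provided the original word does not start with `[k, j]`. -/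
lemma key {i j k : Fin 3} (hji : j ≠ i) (hkj : k ≠ j) (s : SS)
    (h : ¬ ([k, j] <+: s.val)) : [i, j] <+: (fmo i (fmo j (fmo k s))).val := by
  by_cases hk : s.val.head? = some k
  · have h1 : (fmo k s).val = s.val.tail := fmo_val_pos hk
    have ht : (fmo k s).val.head? ≠ some j := by
      rw [h1]
      intro hc
      apply h
      rw [cons_head_tail hk, cons_head_tail hc]
      exact ⟨_, rfl⟩
    have h2 : (fmo j (fmo k s)).val = j :: s.val.tail := by rw [fmo_val_neg ht, h1]
    have hi : (fmo j (fmo k s)).val.head? ≠ some i := by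
      rw [h2]; simpa using hji
    rw [fmo_val_neg hi, h2]
    exact ⟨_, rfl⟩
  · have h1 : (fmo k s).val = k :: s.val := fmo_val_neg hk
    have ht : (fmo k s).val.head? ≠ some j := by
      rw [h1]; simpa using hkj
    have h2 : (fmo j (fmo k s)).val = j :: k :: s.val := by rw [fmo_val_neg ht, h1]
    have hi : (fmo j (fmo k s)).val.head? ≠ some i := by
      rw [h2]; simpa using hji
    rw [fmo_val_neg hi, h2]
    exact ⟨_, rfl⟩

lemma prefix2_eq {a b c d : Fin 3} {l : List (Fin 3)} (h1 : [a, b] <+: l)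
    (h2 : [c, d] <+: l) : a = c ∧ b = d := by
  obtain ⟨t1, ht1⟩ := h1
  obtain ⟨t2, ht2⟩ := h2
  rw [← ht1] at ht2
  simp at ht2
  exact ⟨ht2.1.symm, ht2.2.1.symm⟩

/-- In the free product `A = ⟨a,b,c | a² = b² = c² = 1⟩` of three copies of `ℤ/2`,
the elements `abc, bca, cab` freely generate a free subgroup of rank 3: the homomorphism from
the free group on three generators `x, y, z` to `A` defined by `x ↦ abc`, `y ↦ bca`, `z ↦ cab`
is injective. -/
theorem stmt_3 : Function.Injective jA := by
  letI : MulAction A SS := MulAction.compHom SS psiA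
  have smul_def : ∀ (g : A) (s : SS), g • s = psiA g s := fun _ _ => rfl
  set a : Fin 3 → A := fun i => ![pa * pb * pc, pb * pc * pa, pc * pa * pb] i with ha
  have hj : jA = FreeGroup.lift a := rfl
  rw [hj]
  set X : Fin 3 → Set SS := fun i => {s | [i, i + 1] <+: s.val} with hX
  set Y : Fin 3 → Set SS := fun i => {s | [i + 2, i + 1] <+: s.val} with hY
  have ha0 : a 0 = pa * pb * pc := rfl
  have ha1 : a 1 = pb * pc * pa := rfl
  have ha2 : a 2 = pc * pa * pb := rfl
  have hact : ∀ (n : Fin 3) (s : SS), a n • s = fmo n (fmo (n + 1) (fmo (n + 2) s)) := by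
    intro n s
    rw [smul_def]
    fin_cases n
    · show psiA (a 0) s = fmo 0 (fmo 1 (fmo 2 s))
      rw [ha0]
      simp only [pa, pb, pc, map_mul, psiA_of, Equiv.Perm.mul_apply, sigma_apply]
    · show psiA (a 1) s = fmo 1 (fmo 2 (fmo 0 s))
      rw [ha1]
      simp only [pa, pb, pc, map_mul, psiA_of, Equiv.Perm.mul_apply, sigma_apply]
    · show psiA (a 2) s = fmo 2 (fmo 0 (fmo 1 s))
      rw [ha2]
      simp only [pa, pb, pc, map_mul, psiA_of, Equiv.Perm.mul_apply, sigma_apply]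
  have hactinv : ∀ (n : Fin 3) (s : SS), (a n)⁻¹ • s = fmo (n + 2) (fmo (n + 1) (fmo n s)) := by
    intro n s
    rw [smul_def]
    fin_cases n
    · show psiA (a 0)⁻¹ s = fmo 2 (fmo 1 (fmo 0 s))
      rw [ha0]
      simp only [pa, pb, pc, map_mul, map_inv, mul_inv_rev, psiA_of, sigma_inv,
        Equiv.Perm.mul_apply, sigma_apply]
    · show psiA (a 1)⁻¹ s = fmo 0 (fmo 2 (fmo 1 s))
      rw [ha1]
      simp only [pa, pb, pc, map_mul, map_inv, mul_inv_rev, psiA_of, sigma_inv,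
        Equiv.Perm.mul_apply, sigma_apply]
    · show psiA (a 2)⁻¹ s = fmo 1 (fmo 0 (fmo 2 s))
      rw [ha2]
      simp only [pa, pb, pc, map_mul, map_inv, mul_inv_rev, psiA_of, sigma_inv,
        Equiv.Perm.mul_apply, sigma_apply]
  have d1 : ∀ n : Fin 3, n ≠ n + 1 := by decide
  have d2 : ∀ n : Fin 3, n + 1 ≠ n := by decide
  have d3 : ∀ n : Fin 3, n + 1 ≠ n + 2 := by decide
  have d4 : ∀ n : Fin 3, n + 2 ≠ n + 1 := by decide
  have d5 : ∀ m n : Fin 3, m + 2 = n + 2 → m = n := by decide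
  have d6 : ∀ m n : Fin 3, m = n + 2 → m + 1 = n + 1 → False := by decide
  apply FreeGroup.injective_lift_of_ping_pong a X Y
  · intro n
    exact ⟨⟨[n, n + 1], List.isChain_cons_cons.2 ⟨d1 n, List.isChain_singleton _⟩⟩, List.prefix_refl _⟩
  · intro m n hmn
    exact Set.disjoint_left.2 fun _ hm hn => hmn (prefix2_eq hm hn).1
  · intro m n hmn
    exact Set.disjoint_left.2 fun _ hm hn => hmn (d5 m n (prefix2_eq hm hn).1)
  · intro m n
    exact Set.disjoint_left.2 fun _ hm hn =>
      d6 m n (prefix2_eq hm hn).1 (prefix2_eq hm hn).2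
  · intro n s hs
    rw [Set.mem_smul_set] at hs
    obtain ⟨t, ht, rfl⟩ := hs
    rw [hact]
    exact key (d2 n) (d4 n) t ht
  · intro n s hs
    rw [Set.mem_smul_set] at hs
    obtain ⟨t, ht, rfl⟩ := hs
    rw [Pi.inv_apply, hactinv]
    exact key (d3 n) (d1 n) t ht
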